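/- Let F_l be a left Gabriel filter and F_r a right Gabriel filter on a ring R, and ₗF_r the symmetric filter they induce. If F_l and F_r are both differential, then ₗF_r is differential, i.e. for every R-bimodule M, every derivation δ on R and every δ-derivation d on M, d(ₗt_r(M)) ⊆ ₗt_r(M). -/

import Mathlib

open MulOpposite TensorProduct

/-- A derivation on a ring `S`: an additive map satisfying the Leibniz rule
`δ (a * b) = δ a * b + a * δ b`. -/
def IsDerivation {S : Type*} [Ring S] (δ : S → S) : Prop :=
  (∀ a b : S, δ (a + b) = δ a + δ b) ∧ (∀ a b : S, δ (a * b) = δ a * b + a * δ b)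

/-- A Gabriel filter of left ideals of a ring `S`.  Taking `S = Rᵐᵒᵖ`, this encodes a
Gabriel filter of right ideals of `R`. -/
structure GabrielFilter (S : Type*) [Ring S] where
  sets : Set (Ideal S)
  top_mem : ⊤ ∈ sets
  mono : ∀ ⦃I J : Ideal S⦄, I ∈ sets → I ≤ J → J ∈ sets
  inf_mem : ∀ ⦃I J : Ideal S⦄, I ∈ sets → J ∈ sets → I ⊓ J ∈ sets
  quot_mem : ∀ ⦃I : Ideal S⦄, I ∈ sets → ∀ s : S,
    Submodule.comap (LinearMap.toSpanSingleton S S s) I ∈ sets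
  trans : ∀ ⦃I J : Ideal S⦄, J ∈ sets →
    (∀ s ∈ J, Submodule.comap (LinearMap.toSpanSingleton S S s) I ∈ sets) → I ∈ sets

/-- The torsion set of a module for the torsion theory corresponding to a filter `𝔉` of
ideals: the elements whose annihilator belongs to `𝔉`. -/
def torsionSet {S : Type*} [Ring S] (𝔉 : Set (Ideal S)) (M : Type*) [AddCommGroup M]
    [Module S M] : Set M :=
  {x : M | LinearMap.ker (LinearMap.toSpanSingleton S M x) ∈ 𝔉}

/-- The enveloping ring `R ⊗_ℤ Rᵐᵒᵖ`; an `R`-bimodule is the same thing as a right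
`R ⊗_ℤ Rᵐᵒᵖ`-module, i.e. a left `(R ⊗_ℤ Rᵐᵒᵖ)ᵐᵒᵖ`-module, via `x • (r ⊗ s) = s x r`. -/
abbrev Env (R : Type*) [Ring R] := R ⊗[ℤ] Rᵐᵒᵖ

/-- The left annihilator of an element of an `R`-bimodule, a left ideal of `R`:
`ann_l(x) = {s : R | s • x = 0}`, where the left action of `s` is the action of
`1 ⊗ op s`. -/
def lAnn {R : Type*} [Ring R] (M : Type*) [AddCommGroup M] [Module (Env R)ᵐᵒᵖ M]
    (x : M) : Ideal R where
  carrier := {s : R | op ((1 : R) ⊗ₜ[ℤ] op s) • x = 0}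
  zero_mem' := by simp; exact zero_smul (Env R)ᵐᵒᵖ x
  add_mem' := by
    intro a b ha hb
    simp only [Set.mem_setOf_eq] at *
    rw [show ((1 : R) ⊗ₜ[ℤ] op (a + b)) = (1 : R) ⊗ₜ[ℤ] op a + (1 : R) ⊗ₜ[ℤ] op b by
        rw [op_add, TensorProduct.tmul_add],
      op_add, add_smul, ha, hb, add_zero]
  smul_mem' := by
    intro c s hs
    simp only [Set.mem_setOf_eq, smul_eq_mul] at *
    rw [show ((1 : R) ⊗ₜ[ℤ] op (c * s)) = ((1 : R) ⊗ₜ[ℤ] op s) * ((1 : R) ⊗ₜ[ℤ] op c) by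
        rw [Algebra.TensorProduct.tmul_mul_tmul, one_mul, ← op_mul],
      op_mul, mul_smul, hs, smul_zero]

/-- The right annihilator of an element of an `R`-bimodule, a right ideal of `R`
(encoded as a left ideal of `Rᵐᵒᵖ`): `ann_r(x) = {r | x • r = 0}`, where the right
action of `r` is the action of `r ⊗ 1`. -/
def rAnn {R : Type*} [Ring R] (M : Type*) [AddCommGroup M] [Module (Env R)ᵐᵒᵖ M]
    (x : M) : Ideal Rᵐᵒᵖ where
  carrier := {j : Rᵐᵒᵖ | op (unop j ⊗ₜ[ℤ] (1 : Rᵐᵒᵖ)) • x = 0}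
  zero_mem' := by simp; exact zero_smul (Env R)ᵐᵒᵖ x
  add_mem' := by
    intro a b ha hb
    simp only [Set.mem_setOf_eq] at *
    rw [show (unop (a + b) ⊗ₜ[ℤ] (1 : Rᵐᵒᵖ)) =
          unop a ⊗ₜ[ℤ] (1 : Rᵐᵒᵖ) + unop b ⊗ₜ[ℤ] (1 : Rᵐᵒᵖ) by
        rw [unop_add, TensorProduct.add_tmul],
      op_add, add_smul, ha, hb, add_zero]
  smul_mem' := by
    intro c j hj
    simp only [Set.mem_setOf_eq, smul_eq_mul] at *
    rw [show (unop (c * j) ⊗ₜ[ℤ] (1 : Rᵐᵒᵖ)) =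
          (unop j ⊗ₜ[ℤ] (1 : Rᵐᵒᵖ)) * (unop c ⊗ₜ[ℤ] (1 : Rᵐᵒᵖ)) by
        rw [Algebra.TensorProduct.tmul_mul_tmul, one_mul, unop_mul],
      op_mul, mul_smul, hj, smul_zero]

/-- The symmetric annihilator of an element of a bimodule: the right ideal
`{t ∈ R ⊗_ℤ Rᵐᵒᵖ | x t = 0}`. -/
def symAnn {R : Type*} [Ring R] (M : Type*) [AddCommGroup M] [Module (Env R)ᵐᵒᵖ M]
    (x : M) : Ideal (Env R)ᵐᵒᵖ :=
  LinearMap.ker (LinearMap.toSpanSingleton (Env R)ᵐᵒᵖ M x)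

/-- The right ideal `J ⊗ Rᵐᵒᵖ + R ⊗ I` of `R ⊗_ℤ Rᵐᵒᵖ` generated by a left ideal `I`
and a right ideal `J` of `R`. -/
def symGen {R : Type*} [Ring R] (I : Ideal R) (J : Ideal Rᵐᵒᵖ) : Ideal (Env R)ᵐᵒᵖ :=
  Ideal.span ((fun j : Rᵐᵒᵖ => op (unop j ⊗ₜ[ℤ] (1 : Rᵐᵒᵖ))) '' (J : Set Rᵐᵒᵖ) ∪
    (fun i : R => op ((1 : R) ⊗ₜ[ℤ] op i)) '' (I : Set R))

/-- The symmetric Gabriel filter induced by a left Gabriel filter `Fl` and a right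
Gabriel filter `Fr`: the right ideals of `R ⊗_ℤ Rᵐᵒᵖ` containing `J ⊗ Rᵐᵒᵖ + R ⊗ I` for
some `I ∈ Fl` and `J ∈ Fr`. -/
def symSets {R : Type*} [Ring R] (Fl : GabrielFilter R) (Fr : GabrielFilter Rᵐᵒᵖ) :
    Set (Ideal (Env R)ᵐᵒᵖ) :=
  {K | ∃ I ∈ Fl.sets, ∃ J ∈ Fr.sets, symGen I J ≤ K}

/-- The torsion submodule of a bimodule for the symmetric torsion theory induced by `Fl`
and `Fr`: `ₗt_r(M) = t_l(M) ∩ t_r(M)`. -/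
def symTorsion {R : Type*} [Ring R] (Fl : GabrielFilter R) (Fr : GabrielFilter Rᵐᵒᵖ)
    (M : Type*) [AddCommGroup M] [Module (Env R)ᵐᵒᵖ M] : Set M :=
  {x : M | lAnn M x ∈ Fl.sets} ∩ {x : M | rAnn M x ∈ Fr.sets}

/-- `δ'` is the derivation induced on `R ⊗_ℤ Rᵐᵒᵖ` by the derivation `δ` on `R`:
`δ̄(r ⊗ s) = δ r ⊗ s + r ⊗ δ s`. -/
def IsInducedDerivation {R : Type*} [Ring R] (δ : R → R) (δ' : Env R → Env R) : Prop :=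
  (∀ a b : Env R, δ' (a + b) = δ' a + δ' b) ∧
    ∀ r s : R, δ' (r ⊗ₜ[ℤ] op s) = δ r ⊗ₜ[ℤ] op s + r ⊗ₜ[ℤ] op (δ s)

/-- `d` is a `δ`-derivation on the `R`-bimodule `M`: `d` is additive,
`d (x r) = (d x) r + x (δ r)` and `d (s x) = (δ s) x + s (d x)`. -/
def IsBimodDerivation {R : Type*} [Ring R] (δ : R → R) {M : Type*} [AddCommGroup M]
    [Module (Env R)ᵐᵒᵖ M] (d : M → M) : Prop :=
  (∀ x y : M, d (x + y) = d x + d y) ∧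
  (∀ (x : M) (r : R),
    d (op (r ⊗ₜ[ℤ] (1 : Rᵐᵒᵖ)) • x) =
      op (r ⊗ₜ[ℤ] (1 : Rᵐᵒᵖ)) • d x + op (δ r ⊗ₜ[ℤ] (1 : Rᵐᵒᵖ)) • x) ∧
  (∀ (x : M) (s : R),
    d (op ((1 : R) ⊗ₜ[ℤ] op s) • x) =
      op ((1 : R) ⊗ₜ[ℤ] op (δ s)) • x + op ((1 : R) ⊗ₜ[ℤ] op s) • d x)

/-- The symmetric filter induced by `Fl` and `Fr` is differential: for every `I` in the
filter there is `K` in the filter with `δ̄(K) ⊆ I` for all derivations `δ` on `R`. -/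
def IsSymDifferential {R : Type*} [Ring R] (Fl : GabrielFilter R)
    (Fr : GabrielFilter Rᵐᵒᵖ) : Prop :=
  ∀ I ∈ symSets Fl Fr, ∃ K ∈ symSets Fl Fr, ∀ δ : R → R, IsDerivation δ →
    ∀ δ' : Env R → Env R, IsInducedDerivation δ δ' →
      ∀ t : (Env R)ᵐᵒᵖ, t ∈ K → op (δ' (unop t)) ∈ I

/-- `q : M → Q` realizes `Q` as the symmetric module of quotients of the bimodule `M`
with respect to the symmetric filter induced by `Fl` and `Fr`: the kernel of `q` is
`ₗt_r(M)`, `Q` is torsion free, the cokernel of `q` is torsion, and `Q` is closed. -/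
structure IsSymModuleOfQuotients {R : Type*} [Ring R] (Fl : GabrielFilter R)
    (Fr : GabrielFilter Rᵐᵒᵖ) {M Q : Type*} [AddCommGroup M] [Module (Env R)ᵐᵒᵖ M]
    [AddCommGroup Q] [Module (Env R)ᵐᵒᵖ Q] (q : M →ₗ[(Env R)ᵐᵒᵖ] Q) : Prop where
  ker_eq : (LinearMap.ker q : Set M) = symTorsion Fl Fr M
  torsionFree : symTorsion Fl Fr Q = {0}
  coker_torsion : ∀ y : Q,
    Submodule.comap (LinearMap.toSpanSingleton (Env R)ᵐᵒᵖ Q y) (LinearMap.range q) ∈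
      symSets Fl Fr
  closed : ∀ K ∈ symSets Fl Fr, ∀ f : ↥K →ₗ[(Env R)ᵐᵒᵖ] Q,
    ∃ g : (Env R)ᵐᵒᵖ →ₗ[(Env R)ᵐᵒᵖ] Q, ∀ t : ↥K, g ↑t = f t

universe u

/-- A left Gabriel filter on `R` is differential if for every `I` in the filter there is
`J` in the filter with `δ(J) ⊆ I` for every derivation `δ` on `R`. -/
def IsDifferentialLeft {R : Type*} [Ring R] (Fl : GabrielFilter R) : Prop :=
  ∀ I ∈ Fl.sets, ∃ J ∈ Fl.sets, ∀ δ : R → R, IsDerivation δ → ∀ r ∈ J, δ r ∈ I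

/-- A right Gabriel filter on `R` (encoded over `Rᵐᵒᵖ`) is differential if for every `I`
in the filter there is `J` in the filter with `δ(J) ⊆ I` for every derivation `δ`. -/
def IsDifferentialRight {R : Type*} [Ring R] (Fr : GabrielFilter Rᵐᵒᵖ) : Prop :=
  ∀ I ∈ Fr.sets, ∃ J ∈ Fr.sets, ∀ δ : R → R, IsDerivation δ →
    ∀ x : Rᵐᵒᵖ, x ∈ J → op (δ (unop x)) ∈ I


section Aux

variable {R : Type*} [Ring R]

lemma der_map_zero {S : Type*} [Ring S] {δ : S → S} (h : IsDerivation δ) : δ 0 = 0 := by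
  have := h.1 0 0
  simpa using this

lemma der_map_one {S : Type*} [Ring S] {δ : S → S} (h : IsDerivation δ) : δ 1 = 0 := by
  have := h.2 1 1
  simp only [one_mul, mul_one] at this
  have h2 : δ 1 = δ 1 + δ 1 := this
  have := congrArg (fun x => x - δ 1) h2
  simpa using this.symm

lemma ind_der_zero {δ : R → R} {δ' : Env R → Env R} (h : IsInducedDerivation δ δ') :
    δ' 0 = 0 := by
  have := h.1 0 0
  simpa using this

lemma env_leibniz {δ : R → R} {δ' : Env R → Env R} (hδ : IsDerivation δ)
    (hδ' : IsInducedDerivation δ δ') (a b : Env R) :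
    δ' (a * b) = δ' a * b + a * δ' b := by
  induction a using TensorProduct.induction_on with
  | zero => simp [ind_der_zero hδ']
  | add x y hx hy =>
      simp only [add_mul, hδ'.1, hx, hy]
      abel
  | tmul r s =>
      induction b using TensorProduct.induction_on with
      | zero => simp [ind_der_zero hδ']
      | add x y hx hy =>
          simp only [mul_add, hδ'.1, hx, hy]
          abel
      | tmul r' s' =>
          induction s using MulOpposite.rec' with | _ s =>
          induction s' using MulOpposite.rec' with | _ s' =>
          rw [Algebra.TensorProduct.tmul_mul_tmul, ← op_mul, hδ'.2, hδ.2, hδ.2,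
            hδ'.2, hδ'.2]
          simp only [op_add, op_mul, TensorProduct.add_tmul, TensorProduct.tmul_add,
            add_mul, mul_add, Algebra.TensorProduct.tmul_mul_tmul, ← op_mul]
          abel

end Aux

/-- If the left Gabriel filter `Fl` and the right Gabriel filter `Fr`
are both differential, then the induced symmetric filter `ₗF_r` is differential, i.e.
`d(ₗt_r(M)) ⊆ ₗt_r(M)` for every `R`-bimodule `M`, every derivation `δ` on `R` and every
`δ`-derivation `d` on `M`. -/

theorem symDifferential_of_differential {R : Type u} [Ring R]
    (Fl : GabrielFilter R) (Fr : GabrielFilter Rᵐᵒᵖ)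
    (hl : IsDifferentialLeft Fl) (hr : IsDifferentialRight Fr) :
    IsSymDifferential Fl Fr ∧
      ∀ (M : Type u) [AddCommGroup M] [Module (Env R)ᵐᵒᵖ M],
        ∀ δ : R → R, IsDerivation δ → ∀ d : M → M, IsBimodDerivation δ d →
          ∀ x ∈ symTorsion Fl Fr M, d x ∈ symTorsion Fl Fr M := by
  constructor
  · -- symmetric filter is differential
    rintro I ⟨I0, hI0, J0, hJ0, hgen⟩
    obtain ⟨I1, hI1, hI1d⟩ := hl I0 hI0
    obtain ⟨J1, hJ1, hJ1d⟩ := hr J0 hJ0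
    refine ⟨symGen (I0 ⊓ I1) (J0 ⊓ J1),
      ⟨I0 ⊓ I1, Fl.inf_mem hI0 hI1, J0 ⊓ J1, Fr.inf_mem hJ0 hJ1, le_rfl⟩, ?_⟩
    intro δ hδ δ' hδ' t ht
    -- elements in the initial symGen lie in I
    have hmemI : ∀ (j : Rᵐᵒᵖ), j ∈ J0 → op (unop j ⊗ₜ[ℤ] (1 : Rᵐᵒᵖ)) ∈ I := by
      intro j hj
      exact hgen (Ideal.subset_span (Or.inl ⟨j, hj, rfl⟩))
    have hmemI' : ∀ (i : R), i ∈ I0 → op ((1 : R) ⊗ₜ[ℤ] op i) ∈ I := by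
      intro i hi
      exact hgen (Ideal.subset_span (Or.inr ⟨i, hi, rfl⟩))
    -- prove the stronger property t ∈ I ∧ op (δ' (unop t)) ∈ I by span induction
    have key : t ∈ I ∧ op (δ' (unop t)) ∈ I := by
      refine Submodule.span_induction ?_ ?_ ?_ ?_ ht
      · rintro x (⟨j, hj, rfl⟩ | ⟨i, hi, rfl⟩)
        · refine ⟨hmemI j hj.1, ?_⟩
          have := hδ'.2 (unop j) 1
          rw [der_map_one hδ] at this
          simp only [op_zero, TensorProduct.tmul_zero, add_zero] at this
          rw [op_one] at this
          rw [unop_op, this]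
          have h2 := hmemI (op (δ (unop j))) (hJ1d δ hδ j hj.2)
          exact h2
        · refine ⟨hmemI' i hi.1, ?_⟩
          have := hδ'.2 1 i
          rw [der_map_one hδ] at this
          simp only [TensorProduct.zero_tmul, zero_add] at this
          rw [unop_op, this]
          exact hmemI' (δ i) (hI1d δ hδ i hi.2)
      · constructor
        · exact I.zero_mem
        · rw [unop_zero, ind_der_zero hδ']
          exact I.zero_mem
      · rintro x y _ _ ⟨hx1, hx2⟩ ⟨hy1, hy2⟩
        refine ⟨I.add_mem hx1 hy1, ?_⟩
        rw [unop_add, hδ'.1, op_add]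
        exact I.add_mem hx2 hy2
      · rintro c x _ ⟨hx1, hx2⟩
        refine ⟨I.smul_mem c hx1, ?_⟩
        have hcx : unop (c • x) = unop x * unop c := by
          simp [smul_eq_mul, unop_mul]
        rw [hcx, env_leibniz hδ hδ']
        rw [op_add]
        refine I.add_mem ?_ ?_
        · have : op (δ' (unop x) * unop c) = c * op (δ' (unop x)) := by
            rw [← op_unop c, ← op_mul, op_unop]
          rw [this]
          exact I.mul_mem_left c hx2
        · have : op (unop x * δ' (unop c)) = op (δ' (unop c)) * x := by
            rw [← op_unop x, ← op_mul, op_unop]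
          rw [this]
          exact I.mul_mem_left _ hx1
    exact key.2
  · -- torsion submodules are closed under δ-derivations
    intro M _ _ δ hδ d hd x hx
    obtain ⟨hxl, hxr⟩ := hx
    have hd0 : d 0 = 0 := by
      have := hd.1 0 0
      simpa using this
    obtain ⟨I1, hI1, hI1d⟩ := hl (lAnn M x) hxl
    obtain ⟨J1, hJ1, hJ1d⟩ := hr (rAnn M x) hxr
    constructor
    · -- left part
      refine Fl.mono (Fl.inf_mem hxl hI1) ?_
      intro s hs
      obtain ⟨hs0, hs1⟩ := hs
      have hzero : op ((1 : R) ⊗ₜ[ℤ] op s) • x = 0 := hs0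
      have hds := hd.2.2 x s
      rw [hzero, hd0] at hds
      have hδs : op ((1 : R) ⊗ₜ[ℤ] op (δ s)) • x = 0 := hI1d δ hδ s hs1
      rw [hδs, zero_add] at hds
      exact hds.symm
    · -- right part
      refine Fr.mono (Fr.inf_mem hxr hJ1) ?_
      intro j hj
      obtain ⟨hj0, hj1⟩ := hj
      have hzero : op (unop j ⊗ₜ[ℤ] (1 : Rᵐᵒᵖ)) • x = 0 := hj0
      have hdj := hd.2.1 x (unop j)
      rw [hzero, hd0] at hdj
      have hδj := hJ1d δ hδ j hj1
      have hδj' : op (δ (unop j) ⊗ₜ[ℤ] (1 : Rᵐᵒᵖ)) • x = 0 := by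
        have := hδj
        simpa [rAnn] using this
      rw [hδj', add_zero] at hdj
      exact hdj.symm
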